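/- The class of layered Heyting algebras has the finite embeddability property: for any layered Heyting algebra 𝔸 and any finite subset B ⊆ A, there exists a finite layered Heyting algebra ℂ and an injective map g : B → ℂ preserving all layered-Heyting-algebra operations insofar as they are defined within B (i.e., if b₁, …, bₙ ∈ B and f_𝔸(b₁,…,bₙ) ∈ B for an operation f, then g(f_𝔸(b₁,…,bₙ)) = f_ℂ(g(b₁),…,g(bₙ))). -/

import Mathlib

/-- A layered Heyting algebra: a Heyting algebra equipped with binary operations
`lay` (▸), `limp` (-▸) and `rimp` (▸-) satisfying the residuation law
`a ▸ b ≤ c ↔ a ≤ b -▸ c ↔ b ≤ a ▸- c`. -/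
class LayeredHeytingAlgebra (A : Type*) extends HeytingAlgebra A where
  lay : A → A → A
  limp : A → A → A
  rimp : A → A → A
  lay_le_iff_limp : ∀ a b c : A, lay a b ≤ c ↔ a ≤ limp b c
  lay_le_iff_rimp : ∀ a b c : A, lay a b ≤ c ↔ b ≤ rimp a c

open LayeredHeytingAlgebra

/-- A witness to the finite embeddability property for the finite partial
subalgebra `B` of `A`: a finite layered Heyting algebra `C` together with an
injection `g : B → C` preserving all the operations insofar as they are
defined within `B`. -/
structure FEPWitness (A : Type*) [LayeredHeytingAlgebra A] (B : Set A) where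
  C : Type
  [finC : Fintype C]
  [algC : LayeredHeytingAlgebra C]
  g : B → C
  inj : Function.Injective g
  map_top : ∀ h : (⊤ : A) ∈ B, g ⟨⊤, h⟩ = ⊤
  map_bot : ∀ h : (⊥ : A) ∈ B, g ⟨⊥, h⟩ = ⊥
  map_inf : ∀ (b₁ b₂ : B) (h : (b₁ : A) ⊓ b₂ ∈ B), g ⟨b₁ ⊓ b₂, h⟩ = g b₁ ⊓ g b₂
  map_sup : ∀ (b₁ b₂ : B) (h : (b₁ : A) ⊔ b₂ ∈ B), g ⟨b₁ ⊔ b₂, h⟩ = g b₁ ⊔ g b₂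
  map_himp : ∀ (b₁ b₂ : B) (h : (b₁ : A) ⇨ b₂ ∈ B), g ⟨b₁ ⇨ b₂, h⟩ = g b₁ ⇨ g b₂
  map_lay : ∀ (b₁ b₂ : B) (h : lay (b₁ : A) b₂ ∈ B),
    g ⟨lay b₁ b₂, h⟩ = lay (g b₁) (g b₂)
  map_limp : ∀ (b₁ b₂ : B) (h : limp (b₁ : A) b₂ ∈ B),
    g ⟨limp b₁ b₂, h⟩ = limp (g b₁) (g b₂)
  map_rimp : ∀ (b₁ b₂ : B) (h : rimp (b₁ : A) b₂ ∈ B),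
    g ⟨rimp b₁ b₂, h⟩ = rimp (g b₁) (g b₂)

namespace LHFep

attribute [local instance] Classical.propDecidable

variable {A : Type*} [LayeredHeytingAlgebra A]

/-- The sublattice of `A` generated by a finite set `S`: all finite sups of finite infs. -/
noncomputable def genSet (S : Finset A) : Finset A :=
  S.powerset.powerset.image (fun 𝒯 => 𝒯.sup (fun T => T.inf id))

theorem mem_genSet_of_mem {S : Finset A} {a : A} (ha : a ∈ S) : a ∈ genSet S := by
  refine Finset.mem_image.2 ⟨{{a}}, ?_, ?_⟩
  · simp [Finset.mem_powerset, Finset.singleton_subset_iff, ha]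
  · simp

theorem bot_mem_genSet (S : Finset A) : (⊥ : A) ∈ genSet S := by
  refine Finset.mem_image.2 ⟨∅, ?_, ?_⟩ <;> simp

theorem top_mem_genSet (S : Finset A) : (⊤ : A) ∈ genSet S := by
  refine Finset.mem_image.2 ⟨{∅}, ?_, ?_⟩ <;> simp

theorem sup_mem_genSet {S : Finset A} {x y : A} (hx : x ∈ genSet S) (hy : y ∈ genSet S) :
    x ⊔ y ∈ genSet S := by
  obtain ⟨𝒯, h𝒯, rfl⟩ := Finset.mem_image.1 hx
  obtain ⟨𝒰, h𝒰, rfl⟩ := Finset.mem_image.1 hy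
  refine Finset.mem_image.2 ⟨𝒯 ∪ 𝒰, ?_, ?_⟩
  · simp only [Finset.mem_powerset] at *
    exact Finset.union_subset h𝒯 h𝒰
  · exact Finset.sup_union (s₁ := 𝒯) (s₂ := 𝒰) (f := fun T => T.inf id)

theorem inf_mem_genSet {S : Finset A} {x y : A} (hx : x ∈ genSet S) (hy : y ∈ genSet S) :
    x ⊓ y ∈ genSet S := by
  obtain ⟨𝒯, h𝒯, rfl⟩ := Finset.mem_image.1 hx
  obtain ⟨𝒰, h𝒰, rfl⟩ := Finset.mem_image.1 hy
  refine Finset.mem_image.2 ⟨(𝒯 ×ˢ 𝒰).image (fun p => p.1 ∪ p.2), ?_, ?_⟩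
  · simp only [Finset.mem_powerset] at *
    intro T hT
    obtain ⟨p, hp, rfl⟩ := Finset.mem_image.1 hT
    obtain ⟨h1, h2⟩ := Finset.mem_product.1 hp
    exact Finset.mem_powerset.2 (Finset.union_subset
      (Finset.mem_powerset.1 (h𝒯 h1)) (Finset.mem_powerset.1 (h𝒰 h2)))
  · rw [Finset.sup_image, Finset.sup_inf_sup]
    apply Finset.sup_congr rfl
    intro p _
    exact Finset.inf_union (s₁ := p.1) (s₂ := p.2) (f := id)

theorem finsetSup_mem {S : Finset A} {t : Finset A} (h : ∀ x ∈ t, x ∈ genSet S) :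
    t.sup id ∈ genSet S := by
  induction t using Finset.induction with
  | empty => simpa using bot_mem_genSet S
  | insert _ _ hx ih =>
    rw [Finset.sup_insert]
    exact sup_mem_genSet (h _ (Finset.mem_insert_self _ _))
      (ih fun x hx => h x (Finset.mem_insert_of_mem hx))

theorem finsetInf_mem {S : Finset A} {t : Finset A} (h : ∀ x ∈ t, x ∈ genSet S) :
    t.inf id ∈ genSet S := by
  induction t using Finset.induction with
  | empty => simpa using top_mem_genSet S
  | insert _ _ hx ih =>
    rw [Finset.inf_insert]
    exact inf_mem_genSet (h _ (Finset.mem_insert_self _ _))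
      (ih fun x hx => h x (Finset.mem_insert_of_mem hx))

/-- Least element of the generated sublattice above `a`. -/
noncomputable def gam (S : Finset A) (a : A) : A :=
  ((genSet S).filter (fun d => a ≤ d)).inf id

/-- Greatest element of the generated sublattice below `a`. -/
noncomputable def del (S : Finset A) (a : A) : A :=
  ((genSet S).filter (fun d => d ≤ a)).sup id

theorem gam_mem (S : Finset A) (a : A) : gam S a ∈ genSet S :=
  finsetInf_mem fun x hx => (Finset.mem_filter.1 hx).1

theorem del_mem (S : Finset A) (a : A) : del S a ∈ genSet S :=
  finsetSup_mem fun x hx => (Finset.mem_filter.1 hx).1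

theorem le_gam (S : Finset A) (a : A) : a ≤ gam S a :=
  Finset.le_inf fun d hd => (Finset.mem_filter.1 hd).2

theorem del_le (S : Finset A) (a : A) : del S a ≤ a :=
  Finset.sup_le fun d hd => (Finset.mem_filter.1 hd).2

theorem gam_le_iff {S : Finset A} {z : A} (hz : z ∈ genSet S) {a : A} :
    gam S a ≤ z ↔ a ≤ z :=
  ⟨fun h => (le_gam S a).trans h,
   fun h => by
     refine Finset.inf_le (f := id) (b := z) ?_
     exact Finset.mem_filter.2 ⟨hz, h⟩⟩

theorem le_del_iff {S : Finset A} {z : A} (hz : z ∈ genSet S) {a : A} :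
    z ≤ del S a ↔ z ≤ a :=
  ⟨fun h => h.trans (del_le S a),
   fun h => by
     refine Finset.le_sup (f := id) (b := z) ?_
     exact Finset.mem_filter.2 ⟨hz, h⟩⟩

theorem gam_eq {S : Finset A} {a : A} (ha : a ∈ genSet S) : gam S a = a :=
  le_antisymm ((gam_le_iff ha).2 le_rfl) (le_gam S a)

theorem del_eq {S : Finset A} {a : A} (ha : a ∈ genSet S) : del S a = a :=
  le_antisymm (del_le S a) ((le_del_iff ha).2 le_rfl)

/-- The generated finite layered Heyting algebra, as a subtype. -/
def GS (S : Finset A) : Type _ := {x : A // x ∈ genSet S}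

noncomputable instance (S : Finset A) : Lattice (GS S) :=
  Subtype.lattice (fun _ _ hx hy => sup_mem_genSet hx hy)
    (fun _ _ hx hy => inf_mem_genSet hx hy)

noncomputable instance (S : Finset A) : BoundedOrder (GS S) :=
  Subtype.boundedOrder (bot_mem_genSet S) (top_mem_genSet S)

noncomputable instance (S : Finset A) : HImp (GS S) :=
  ⟨fun x y => ⟨del S (x.1 ⇨ y.1), del_mem S _⟩⟩

noncomputable instance (S : Finset A) : HasCompl (GS S) := ⟨fun x => x ⇨ ⊥⟩

noncomputable instance (S : Finset A) : HeytingAlgebra (GS S) where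
  le_top a := le_top (α := A)
  bot_le a := bot_le (α := A)
  le_himp_iff a b c := by
    change a.1 ≤ del S (b.1 ⇨ c.1) ↔ a.1 ⊓ b.1 ≤ c.1
    rw [le_del_iff a.2, le_himp_iff]
  compl x := x ⇨ ⊥
  himp_bot _ := rfl

noncomputable instance (S : Finset A) : LayeredHeytingAlgebra (GS S) where
  lay x y := ⟨gam S (lay x.1 y.1), gam_mem S _⟩
  limp x y := ⟨del S (limp x.1 y.1), del_mem S _⟩
  rimp x y := ⟨del S (rimp x.1 y.1), del_mem S _⟩
  lay_le_iff_limp a b c := by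
    change gam S (lay a.1 b.1) ≤ c.1 ↔ a.1 ≤ del S (limp b.1 c.1)
    rw [gam_le_iff c.2, le_del_iff a.2, lay_le_iff_limp]
  lay_le_iff_rimp a b c := by
    change gam S (lay a.1 b.1) ≤ c.1 ↔ b.1 ≤ del S (rimp a.1 c.1)
    rw [gam_le_iff c.2, le_del_iff b.2, lay_le_iff_rimp]

noncomputable instance (S : Finset A) : Fintype (GS S) :=
  inferInstanceAs (Fintype {x : A // x ∈ genSet S})

end LHFep

open LHFep

/-- The class of layered Heyting algebras has the finite embeddability
property. -/
theorem layeredHeyting_fep (A : Type*) [LayeredHeytingAlgebra A]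
    (B : Set A) (hB : B.Finite) : Nonempty (FEPWitness A B) := by
  classical
  set S : Finset A := hB.toFinset with hSdef
  have hBS : ∀ b : B, (b : A) ∈ genSet S := fun b =>
    mem_genSet_of_mem (hB.mem_toFinset.2 b.2)
  set n := Fintype.card (GS S) with hn
  let e : GS S ≃ Fin n := Fintype.equivFin _
  letI : Max (Fin n) := ⟨fun a b => e (e.symm a ⊔ e.symm b)⟩
  letI : Min (Fin n) := ⟨fun a b => e (e.symm a ⊓ e.symm b)⟩
  letI : Top (Fin n) := ⟨e ⊤⟩
  letI : Bot (Fin n) := ⟨e ⊥⟩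
  letI : HImp (Fin n) := ⟨fun a b => e (e.symm a ⇨ e.symm b)⟩
  letI : Compl (Fin n) := ⟨fun a => e ((e.symm a)ᶜ)⟩
  letI : LE (Fin n) := ⟨fun a b => e.symm a ≤ e.symm b⟩
  letI : LT (Fin n) := ⟨fun a b => e.symm a < e.symm b⟩
  letI instH : HeytingAlgebra (Fin n) :=
    e.symm.injective.heytingAlgebra e.symm Iff.rfl Iff.rfl
      (fun a b => e.symm_apply_apply _)
      (fun a b => e.symm_apply_apply _)
      (e.symm_apply_apply _)
      (e.symm_apply_apply _)
      (fun a => e.symm_apply_apply _)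
      (fun a b => e.symm_apply_apply _)
  letI instL : LayeredHeytingAlgebra (Fin n) :=
  { lay := fun a b => e (LayeredHeytingAlgebra.lay (e.symm a) (e.symm b))
    limp := fun a b => e (LayeredHeytingAlgebra.limp (e.symm a) (e.symm b))
    rimp := fun a b => e (LayeredHeytingAlgebra.rimp (e.symm a) (e.symm b))
    lay_le_iff_limp := fun a b c => by
      show e.symm (e (LayeredHeytingAlgebra.lay (e.symm a) (e.symm b))) ≤ e.symm c ↔
        e.symm a ≤ e.symm (e (LayeredHeytingAlgebra.limp (e.symm b) (e.symm c)))
      rw [e.symm_apply_apply, e.symm_apply_apply, LayeredHeytingAlgebra.lay_le_iff_limp]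
    lay_le_iff_rimp := fun a b c => by
      show e.symm (e (LayeredHeytingAlgebra.lay (e.symm a) (e.symm b))) ≤ e.symm c ↔
        e.symm b ≤ e.symm (e (LayeredHeytingAlgebra.rimp (e.symm a) (e.symm c)))
      rw [e.symm_apply_apply, e.symm_apply_apply, LayeredHeytingAlgebra.lay_le_iff_rimp] }
  have einf : ∀ x y : GS S, e x ⊓ e y = e (x ⊓ y) := fun x y => by
    show e (e.symm (e x) ⊓ e.symm (e y)) = _
    rw [e.symm_apply_apply, e.symm_apply_apply]
  have esup : ∀ x y : GS S, e x ⊔ e y = e (x ⊔ y) := fun x y => by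
    show e (e.symm (e x) ⊔ e.symm (e y)) = _
    rw [e.symm_apply_apply, e.symm_apply_apply]
  have ehimp : ∀ x y : GS S, e x ⇨ e y = e (x ⇨ y) := fun x y => by
    show e (e.symm (e x) ⇨ e.symm (e y)) = _
    rw [e.symm_apply_apply, e.symm_apply_apply]
  have elay : ∀ x y : GS S,
      LayeredHeytingAlgebra.lay (e x) (e y) = e (LayeredHeytingAlgebra.lay x y) := fun x y => by
    show e (LayeredHeytingAlgebra.lay (e.symm (e x)) (e.symm (e y))) = _
    rw [e.symm_apply_apply, e.symm_apply_apply]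
  have elimp : ∀ x y : GS S,
      LayeredHeytingAlgebra.limp (e x) (e y) = e (LayeredHeytingAlgebra.limp x y) := fun x y => by
    show e (LayeredHeytingAlgebra.limp (e.symm (e x)) (e.symm (e y))) = _
    rw [e.symm_apply_apply, e.symm_apply_apply]
  have erimp : ∀ x y : GS S,
      LayeredHeytingAlgebra.rimp (e x) (e y) = e (LayeredHeytingAlgebra.rimp x y) := fun x y => by
    show e (LayeredHeytingAlgebra.rimp (e.symm (e x)) (e.symm (e y))) = _
    rw [e.symm_apply_apply, e.symm_apply_apply]
  refine ⟨{ C := Fin n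
            g := fun b => e ⟨(b : A), hBS b⟩
            inj := fun b₁ b₂ h => by
              have h2 := e.injective h
              have h3 : (b₁ : A) = (b₂ : A) := congrArg (fun x : GS S => x.1) h2
              exact Subtype.ext h3
            map_top := fun h => congrArg e (Subtype.ext rfl)
            map_bot := fun h => congrArg e (Subtype.ext rfl)
            map_inf := fun b₁ b₂ h => by
              erw [einf]; exact congrArg e (Subtype.ext rfl)
            map_sup := fun b₁ b₂ h => by
              erw [esup]; exact congrArg e (Subtype.ext rfl)
            map_himp := fun b₁ b₂ h => by
              erw [ehimp]
              exact congrArg e (Subtype.ext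
                (del_eq (mem_genSet_of_mem (hB.mem_toFinset.2 h))).symm)
            map_lay := fun b₁ b₂ h => by
              erw [elay]
              exact congrArg e (Subtype.ext
                (gam_eq (mem_genSet_of_mem (hB.mem_toFinset.2 h))).symm)
            map_limp := fun b₁ b₂ h => by
              erw [elimp]
              exact congrArg e (Subtype.ext
                (del_eq (mem_genSet_of_mem (hB.mem_toFinset.2 h))).symm)
            map_rimp := fun b₁ b₂ h => by
              erw [erimp]
              exact congrArg e (Subtype.ext
                (del_eq (mem_genSet_of_mem (hB.mem_toFinset.2 h))).symm) }⟩
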